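/- arXiv:2302.03334 — 2 statements merged into one kernel-verified Lean document; each statement's English description precedes it below -/
import Mathlib

section
/- The set of intrinsic mode function souls S_{μ0,μ1,μ2} is convex: if (a1,φ1) and (a2,φ2) belong to S_{μ0,μ1,μ2} and q ∈ [0,1], then ((1-q)·a1 + q·a2, (1-q)·φ1 + q·φ2) also belongs to S_{μ0,μ1,μ2}. -/
/-- Intrinsic mode function soul (IMFS) with characteristic (μ0, μ1, μ2). -/
def IMFS (μ0 μ1 μ2 : ℝ) (a φ : ℝ → ℝ) : Prop :=
  ContDiff ℝ 1 a ∧ ContDiff ℝ 2 φ ∧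
  (∀ t : ℝ, 0 ≤ a t) ∧ (∀ t : ℝ, μ0 ≤ deriv φ t) ∧
  (∀ t : ℝ, |deriv a t| ≤ μ1 * |deriv φ t|) ∧
  (∀ t : ℝ, |deriv (deriv φ) t| ≤ μ2 * |deriv φ t|)

theorem imfs_convex (μ0 μ1 μ2 : ℝ) (hμ0 : 0 < μ0) (hμ1 : 0 < μ1) (hμ2 : 0 < μ2)
    (a1 φ1 a2 φ2 : ℝ → ℝ)
    (h1 : IMFS μ0 μ1 μ2 a1 φ1) (h2 : IMFS μ0 μ1 μ2 a2 φ2)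
    (q : ℝ) (hq : q ∈ Set.Icc (0:ℝ) 1) :
    IMFS μ0 μ1 μ2 (fun t => (1 - q) * a1 t + q * a2 t)
      (fun t => (1 - q) * φ1 t + q * φ2 t) := by
  obtain ⟨ha1, hφ1, ha1nn, hφ1', ha1b, hφ1b⟩ := h1
  obtain ⟨ha2, hφ2, ha2nn, hφ2', ha2b, hφ2b⟩ := h2
  obtain ⟨hq0, hq1⟩ := hq
  have hq0' : 0 ≤ 1 - q := by linarith
  have da1 : Differentiable ℝ a1 := ha1.differentiable (by norm_num)
  have da2 : Differentiable ℝ a2 := ha2.differentiable (by norm_num)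
  have dφ1 : Differentiable ℝ φ1 := hφ1.differentiable (by norm_num)
  have dφ2 : Differentiable ℝ φ2 := hφ2.differentiable (by norm_num)
  have hφ1d : ContDiff ℝ 1 (deriv φ1) :=
    ((contDiff_succ_iff_deriv (n := 1)).mp hφ1).2.2
  have hφ2d : ContDiff ℝ 1 (deriv φ2) :=
    ((contDiff_succ_iff_deriv (n := 1)).mp hφ2).2.2
  have ddφ1 : Differentiable ℝ (deriv φ1) := hφ1d.differentiable (by norm_num)
  have ddφ2 : Differentiable ℝ (deriv φ2) := hφ2d.differentiable (by norm_num)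
  have hda : deriv (fun t => (1 - q) * a1 t + q * a2 t)
      = fun t => (1 - q) * deriv a1 t + q * deriv a2 t := by
    funext t
    rw [deriv_fun_add ((da1 t).const_mul _) ((da2 t).const_mul _),
      deriv_const_mul _ (da1 t), deriv_const_mul _ (da2 t)]
  have hdφ : deriv (fun t => (1 - q) * φ1 t + q * φ2 t)
      = fun t => (1 - q) * deriv φ1 t + q * deriv φ2 t := by
    funext t
    rw [deriv_fun_add ((dφ1 t).const_mul _) ((dφ2 t).const_mul _),
      deriv_const_mul _ (dφ1 t), deriv_const_mul _ (dφ2 t)]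
  have hddφ : deriv (deriv (fun t => (1 - q) * φ1 t + q * φ2 t))
      = fun t => (1 - q) * deriv (deriv φ1) t + q * deriv (deriv φ2) t := by
    rw [hdφ]
    funext t
    rw [deriv_fun_add ((ddφ1 t).const_mul _) ((ddφ2 t).const_mul _),
      deriv_const_mul _ (ddφ1 t), deriv_const_mul _ (ddφ2 t)]
  have habs : ∀ t, |deriv (fun t => (1 - q) * φ1 t + q * φ2 t) t|
      = (1 - q) * |deriv φ1 t| + q * |deriv φ2 t| := by
    intro t
    rw [hdφ]
    have h1p : 0 ≤ deriv φ1 t := le_trans hμ0.le (hφ1' t)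
    have h2p : 0 ≤ deriv φ2 t := le_trans hμ0.le (hφ2' t)
    rw [abs_of_nonneg (add_nonneg (mul_nonneg hq0' h1p) (mul_nonneg hq0 h2p)), abs_of_nonneg h1p, abs_of_nonneg h2p]
  refine ⟨(ha1.const_smul (1 - q)).add (ha2.const_smul q),
    (hφ1.const_smul (1 - q)).add (hφ2.const_smul q),
    fun t => add_nonneg (mul_nonneg hq0' (ha1nn t)) (mul_nonneg hq0 (ha2nn t)), fun t => ?_, fun t => ?_, fun t => ?_⟩
  · rw [hdφ]
    have := hφ1' t; have := hφ2' t
    show μ0 ≤ (1 - q) * deriv φ1 t + q * deriv φ2 t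
    nlinarith
  · rw [hda, habs t]
    calc |(1 - q) * deriv a1 t + q * deriv a2 t|
        ≤ |(1 - q) * deriv a1 t| + |q * deriv a2 t| := abs_add_le _ _
      _ = (1 - q) * |deriv a1 t| + q * |deriv a2 t| := by
          rw [abs_mul, abs_mul, abs_of_nonneg hq0', abs_of_nonneg hq0]
      _ ≤ (1 - q) * (μ1 * |deriv φ1 t|) + q * (μ1 * |deriv φ2 t|) := by
          gcongr <;> [exact ha1b t; exact ha2b t]
      _ = μ1 * ((1 - q) * |deriv φ1 t| + q * |deriv φ2 t|) := by ring
  · rw [hddφ, habs t]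
    calc |(1 - q) * deriv (deriv φ1) t + q * deriv (deriv φ2) t|
        ≤ |(1 - q) * deriv (deriv φ1) t| + |q * deriv (deriv φ2) t| := abs_add_le _ _
      _ = (1 - q) * |deriv (deriv φ1) t| + q * |deriv (deriv φ2) t| := by
          rw [abs_mul, abs_mul, abs_of_nonneg hq0', abs_of_nonneg hq0]
      _ ≤ (1 - q) * (μ2 * |deriv φ1 t|) + q * (μ2 * |deriv φ2 t|) := by
          gcongr <;> [exact hφ1b t; exact hφ2b t]
      _ = μ2 * ((1 - q) * |deriv φ1 t| + q * |deriv φ2 t|) := by ring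
end

section
/- Let a ∈ C²(ℝ,ℝ) with a(t) > 0 for all t and φ ∈ C²(ℝ,ℝ) with φ'(t) ≠ 0 for all t. Define A := a'/a and Ω := 1/(φ')². Then the second-order IMF differential operator D_{(a,φ)} := Ω·D² + (-2·Ω·A + ½·Ω')·D¹ + (Ω·(A² - A') - ½·Ω'·A + 1)·D⁰ annihilates u(t) := a(t)·cos(φ(t)), i.e. D_{(a,φ)} u ≡ 0. -/
/-- The second-order IMF differential operator annihilates `u = a·cos(φ)`. -/
theorem imf_diffop_annihilates (a φ : ℝ → ℝ)
    (ha : ContDiff ℝ 2 a) (hφ : ContDiff ℝ 2 φ)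
    (hapos : ∀ t, 0 < a t) (hφ' : ∀ t, deriv φ t ≠ 0) :
    ∀ t : ℝ,
      (fun t => 1 / (deriv φ t) ^ 2) t *
          deriv (deriv (fun x => a x * Real.cos (φ x))) t
        + (-2 * (fun t => 1 / (deriv φ t) ^ 2) t * (fun t => deriv a t / a t) t
            + (1 / 2) * deriv (fun t => 1 / (deriv φ t) ^ 2) t) *
          deriv (fun x => a x * Real.cos (φ x)) t
        + ((fun t => 1 / (deriv φ t) ^ 2) t *
              (((fun t => deriv a t / a t) t) ^ 2 - deriv (fun t => deriv a t / a t) t)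
            - (1 / 2) * deriv (fun t => 1 / (deriv φ t) ^ 2) t *
              (fun t => deriv a t / a t) t
            + 1) * (a t * Real.cos (φ t)) = 0 := by
  intro t
  have ha1 : Differentiable ℝ a := ha.differentiable (by norm_num)
  have hφ1 : Differentiable ℝ φ := hφ.differentiable (by norm_num)
  have ha2 : Differentiable ℝ (deriv a) := by
    have h := (contDiff_succ_iff_deriv.mp
      (show ContDiff ℝ (1 + 1) a by rw [show ((1:WithTop ℕ∞) + 1) = 2 by norm_num]; exact ha)).2.2
    exact h.differentiable (by norm_num)
  have hφ2 : Differentiable ℝ (deriv φ) := by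
    have h := (contDiff_succ_iff_deriv.mp
      (show ContDiff ℝ (1 + 1) φ by rw [show ((1:WithTop ℕ∞) + 1) = 2 by norm_num]; exact hφ)).2.2
    exact h.differentiable (by norm_num)
  -- first derivative of u
  have hu1 : ∀ s, HasDerivAt (fun x => a x * Real.cos (φ x))
      (deriv a s * Real.cos (φ s) - a s * (Real.sin (φ s) * deriv φ s)) s := by
    intro s
    have hc : HasDerivAt (fun x => Real.cos (φ x)) (-Real.sin (φ s) * deriv φ s) s :=
      (Real.hasDerivAt_cos (φ s)).comp s (hφ1 s).hasDerivAt
    have := ((ha1 s).hasDerivAt.mul hc)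
    exact this.congr_deriv (by ring)
  have hu1' : deriv (fun x => a x * Real.cos (φ x))
      = fun s => deriv a s * Real.cos (φ s) - a s * (Real.sin (φ s) * deriv φ s) :=
    funext fun s => (hu1 s).deriv
  -- second derivative of u
  have hu2 : deriv (deriv (fun x => a x * Real.cos (φ x))) t
      = deriv (deriv a) t * Real.cos (φ t) - 2 * deriv a t * Real.sin (φ t) * deriv φ t
        - a t * Real.cos (φ t) * (deriv φ t) ^ 2 - a t * Real.sin (φ t) * deriv (deriv φ) t := by
    rw [hu1']
    have hs : HasDerivAt (fun x => Real.sin (φ x)) (Real.cos (φ t) * deriv φ t) t :=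
      (Real.hasDerivAt_sin (φ t)).comp t (hφ1 t).hasDerivAt
    have hc : HasDerivAt (fun x => Real.cos (φ x)) (-Real.sin (φ t) * deriv φ t) t :=
      (Real.hasDerivAt_cos (φ t)).comp t (hφ1 t).hasDerivAt
    have h1 : HasDerivAt (fun s => deriv a s * Real.cos (φ s))
        (deriv (deriv a) t * Real.cos (φ t) + deriv a t * (-Real.sin (φ t) * deriv φ t)) t :=
      (ha2 t).hasDerivAt.mul hc
    have h2 : HasDerivAt (fun s => a s * (Real.sin (φ s) * deriv φ s))
        (deriv a t * (Real.sin (φ t) * deriv φ t)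
          + a t * (Real.cos (φ t) * deriv φ t * deriv φ t
              + Real.sin (φ t) * deriv (deriv φ) t)) t :=
      (ha1 t).hasDerivAt.mul (hs.mul (hφ2 t).hasDerivAt)
    refine (h1.sub h2).deriv.trans ?_
    ring
  -- derivative of A = a'/a
  have hA : deriv (fun s => deriv a s / a s) t
      = (deriv (deriv a) t * a t - deriv a t * deriv a t) / (a t) ^ 2 :=
    ((ha2 t).hasDerivAt.div (ha1 t).hasDerivAt (hapos t).ne').deriv
  -- derivative of Ω = 1/(φ')²
  have hΩ : deriv (fun s => 1 / (deriv φ s) ^ 2) t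
      = -(2 * deriv φ t * deriv (deriv φ) t) / ((deriv φ t) ^ 2) ^ 2 := by
    have hp : HasDerivAt (fun s => (deriv φ s) ^ 2)
        (2 * deriv φ t ^ 1 * deriv (deriv φ) t) t := (hφ2 t).hasDerivAt.pow 2
    have := (hp.inv (pow_ne_zero 2 (hφ' t))).deriv
    simp only [one_div]
    refine this.trans ?_
    ring
  rw [hu2]
  simp only [hu1', hA, hΩ]
  have hat := (hapos t).ne'
  have hpt := hφ' t
  field_simp
  ring
end
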